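/- For 1<q<p and f,A,F>0 satisfying f^q < A < f^{(p-q)/(p-1)} F^{(q-1)/(p-1)}: if there exists κ ∈ ((f^q/A)^{1/(q-1)}, 1) with ω_q(f^q/(κ^{q-1}A)) = ω_p(f^p/(κ^{p-1}F)), then ω_q(f^q/A) > ω_p(f^p/F). -/

import Mathlib

open Real Set


private lemma H_hasDerivAt (r z : ℝ) (hz : 0 < z) :
    HasDerivAt (fun z : ℝ => r * z ^ (r - 1) - (r - 1) * z ^ r)
      (r * ((r - 1) * z ^ (r - 2)) - (r - 1) * (r * z ^ (r - 1))) z := by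
  have h1 : HasDerivAt (fun z : ℝ => z ^ (r - 1)) ((r - 1) * z ^ (r - 1 - 1)) z :=
    Real.hasDerivAt_rpow_const (Or.inl hz.ne')
  have h2 : HasDerivAt (fun z : ℝ => z ^ r) (r * z ^ (r - 1)) z := by
    simpa using Real.hasDerivAt_rpow_const (x := z) (p := r) (Or.inl hz.ne')
  have : r - 1 - 1 = r - 2 := by ring
  rw [this] at h1
  exact (h1.const_mul r).sub (h2.const_mul (r - 1))

private lemma H_strictAntiOn (r : ℝ) (hr : 1 < r) :
    StrictAntiOn (fun z : ℝ => r * z ^ (r - 1) - (r - 1) * z ^ r) (Ici 1) := by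
  apply strictAntiOn_of_deriv_neg (convex_Ici 1)
  · apply ContinuousOn.sub
    · exact (continuousOn_id.rpow_const fun x _ => Or.inr (by linarith)).const_smul r
    · exact (continuousOn_id.rpow_const fun x _ => Or.inr (by linarith)).const_smul (r - 1)
  · intro x hx
    rw [interior_Ici] at hx
    have hx0 : (0 : ℝ) < x := lt_trans one_pos hx
    rw [(H_hasDerivAt r x hx0).deriv]
    have : x ^ (r - 2) < x ^ (r - 1) :=
      Real.rpow_lt_rpow_of_exponent_lt hx (by linarith)
    have he : r * ((r - 1) * x ^ (r - 2)) - (r - 1) * (r * x ^ (r - 1))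
        = r * (r - 1) * (x ^ (r - 2) - x ^ (r - 1)) := by ring
    rw [he]
    apply mul_neg_of_pos_of_neg
    · nlinarith
    · linarith

private lemma H_top (r : ℝ) (hr : 1 < r) :
    r * (r / (r - 1)) ^ (r - 1) - (r - 1) * (r / (r - 1)) ^ r = 0 := by
  have hr1 : (0 : ℝ) < r - 1 := by linarith
  have hc : (0 : ℝ) < r / (r - 1) := by positivity
  have h : (r / (r - 1)) ^ r = (r / (r - 1)) ^ (r - 1) * (r / (r - 1)) := by
    rw [← Real.rpow_add_one hc.ne' (r - 1)]
    norm_num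
  rw [h]
  field_simp
  ring

private lemma H_one_lt_top (r : ℝ) (hr : 1 < r) : 1 < r / (r - 1) := by
  rw [lt_div_iff₀ (by linarith)]; linarith

private lemma H_pos (r : ℝ) (hr : 1 < r) {z : ℝ} (h1 : 1 ≤ z) (h2 : z < r / (r - 1)) :
    0 < r * z ^ (r - 1) - (r - 1) * z ^ r := by
  have h := H_strictAntiOn r hr h1 (le_of_lt (H_one_lt_top r hr)) h2
  simp only at h
  rwa [H_top r hr] at h

private lemma L_strictAntiOn (p q : ℝ) (hq : 1 < q) (hpq : q < p) :
    StrictAntiOn (fun z : ℝ => log (p * z ^ (p - 1) - (p - 1) * z ^ p)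
      - (p - 1) / (q - 1) * log (q * z ^ (q - 1) - (q - 1) * z ^ q)) (Ico 1 (p / (p - 1))) := by
  have hp : 1 < p := hq.trans hpq
  have hq1 : (0:ℝ) < q - 1 := by linarith
  have hp1 : (0:ℝ) < p - 1 := by linarith
  have htopq : p / (p - 1) < q / (q - 1) := by
    rw [div_lt_div_iff₀ hp1 hq1]; nlinarith
  have htop : p / (p - 1) < q / (q - 1) := by
    rw [div_lt_div_iff₀ hp1 hq1]; nlinarith
  have hPpos : ∀ z ∈ Ico (1:ℝ) (p / (p - 1)), 0 < p * z ^ (p - 1) - (p - 1) * z ^ p :=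
    fun z hz => H_pos p hp hz.1 hz.2
  have hQpos : ∀ z ∈ Ico (1:ℝ) (p / (p - 1)), 0 < q * z ^ (q - 1) - (q - 1) * z ^ q :=
    fun z hz => H_pos q hq hz.1 (hz.2.trans htop)
  apply strictAntiOn_of_deriv_neg (convex_Ico _ _)
  · apply ContinuousOn.sub
    · apply ContinuousOn.log
      · apply ContinuousOn.sub
        · exact (continuousOn_id.rpow_const fun x _ => Or.inr (by linarith)).const_smul p
        · exact (continuousOn_id.rpow_const fun x _ => Or.inr (by linarith)).const_smul (p - 1)
      · exact fun z hz => (hPpos z hz).ne'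
    · apply ContinuousOn.mul continuousOn_const
      apply ContinuousOn.log
      · apply ContinuousOn.sub
        · exact (continuousOn_id.rpow_const fun x _ => Or.inr (by linarith)).const_smul q
        · exact (continuousOn_id.rpow_const fun x _ => Or.inr (by linarith)).const_smul (q - 1)
      · exact fun z hz => (hQpos z hz).ne'
  · intro x hx
    rw [interior_Ico] at hx
    have hx1 : 1 < x := hx.1
    have hx0 : (0:ℝ) < x := lt_trans one_pos hx1
    have hxm : x ∈ Ico (1:ℝ) (p / (p - 1)) := ⟨hx1.le, hx.2⟩
    have hP := hPpos x hxm
    have hQ := hQpos x hxm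
    have hdP : HasDerivAt (fun z : ℝ => log (p * z ^ (p - 1) - (p - 1) * z ^ p))
        ((p * ((p - 1) * x ^ (p - 2)) - (p - 1) * (p * x ^ (p - 1))) /
          (p * x ^ (p - 1) - (p - 1) * x ^ p)) x :=
      (H_hasDerivAt p x hx0).log hP.ne'
    have hdQ : HasDerivAt (fun z : ℝ => log (q * z ^ (q - 1) - (q - 1) * z ^ q))
        ((q * ((q - 1) * x ^ (q - 2)) - (q - 1) * (q * x ^ (q - 1))) /
          (q * x ^ (q - 1) - (q - 1) * x ^ q)) x :=
      (H_hasDerivAt q x hx0).log hQ.ne'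
    rw [show deriv (fun z : ℝ => log (p * z ^ (p - 1) - (p - 1) * z ^ p) - (p - 1) / (q - 1) * log (q * z ^ (q - 1) - (q - 1) * z ^ q)) x = _ from (hdP.sub (hdQ.const_mul ((p - 1) / (q - 1)))).deriv]
    -- abbreviations
    set a := x ^ (p - 2) with ha
    set b := x ^ (q - 2) with hb
    have hapos : 0 < a := Real.rpow_pos_of_pos hx0 _
    have hbpos : 0 < b := Real.rpow_pos_of_pos hx0 _
    have ep1 : x ^ (p - 1) = a * x := by
      rw [ha, ← Real.rpow_add_one hx0.ne' (p - 2)]; congr 1; ring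
    have ep0 : x ^ p = a * x * x := by
      rw [← ep1, ← Real.rpow_add_one hx0.ne' (p - 1)]; congr 1; ring
    have eq1 : x ^ (q - 1) = b * x := by
      rw [hb, ← Real.rpow_add_one hx0.ne' (q - 2)]; congr 1; ring
    have eq0 : x ^ q = b * x * x := by
      rw [← eq1, ← Real.rpow_add_one hx0.ne' (q - 1)]; congr 1; ring
    rw [ep1, ep0] at hP
    rw [eq1, eq0] at hQ
    rw [ep1, ep0, eq1, eq0]
    rw [← mul_div_assoc, div_sub_div _ _ hP.ne' hQ.ne', div_neg_iff]
    right
    constructor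
    · have hkey : ((p * ((p - 1) * a) - (p - 1) * (p * (a * x))) * (q * (b * x) - (q - 1) * (b * x * x)) -
          (p * (a * x) - (p - 1) * (a * x * x)) *
            ((p - 1) / (q - 1) * (q * ((q - 1) * b) - (q - 1) * (q * (b * x))))) * (q - 1)
          = (p - 1) * (p - q) * a * b * x ^ 2 * (1 - x) * (q - 1) := by
        field_simp
        ring
      have hneg : (p - 1) * (p - q) * a * b * x ^ 2 * (1 - x) * (q - 1) < 0 := by
        apply mul_neg_of_neg_of_pos _ hq1
        apply mul_neg_of_pos_of_neg _ (by linarith)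
        have hx2 : (0:ℝ) < x ^ 2 := by positivity
        exact mul_pos (mul_pos (mul_pos (mul_pos hp1 (by linarith)) hapos) hbpos) hx2
      nlinarith [hkey, hneg, hq1]
    · exact mul_pos hP hQ


set_option maxHeartbeats 1600000

/-- For `1 < q < p` and `f, A, F > 0` with `f^q < A < f^((p-q)/(p-1)) F^((q-1)/(p-1))`:
if there exists `κ ∈ ((f^q/A)^(1/(q-1)), 1)` with
`ω_q(f^q/(κ^(q-1)A)) = ω_p(f^p/(κ^(p-1)F))`, then `ω_q(f^q/A) > ω_p(f^p/F)`. -/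
theorem omega_ineq_of_exists_kappa (p q : ℝ) (hq : 1 < q) (hpq : q < p)
    (ωp ωq : ℝ → ℝ)
    (hωp : ∀ s ∈ Icc (0 : ℝ) 1, ωp s ∈ Icc 1 (p / (p - 1)) ∧
      p * ωp s ^ (p - 1) - (p - 1) * ωp s ^ p = s)
    (hωq : ∀ s ∈ Icc (0 : ℝ) 1, ωq s ∈ Icc 1 (q / (q - 1)) ∧
      q * ωq s ^ (q - 1) - (q - 1) * ωq s ^ q = s)
    (f A F : ℝ) (hf : 0 < f) (hA : 0 < A) (hF : 0 < F)
    (h1 : f ^ q < A) (h2 : A < f ^ ((p - q) / (p - 1)) * F ^ ((q - 1) / (p - 1)))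
    (h3 : ∃ κ ∈ Ioo ((f ^ q / A) ^ (1 / (q - 1))) (1 : ℝ),
      ωq (f ^ q / (κ ^ (q - 1) * A)) = ωp (f ^ p / (κ ^ (p - 1) * F))) :
    ωq (f ^ q / A) > ωp (f ^ p / F) := by
  have hp : 1 < p := hq.trans hpq
  have hq1 : (0:ℝ) < q - 1 := by linarith
  have hp1 : (0:ℝ) < p - 1 := by linarith
  have htopq : p / (p - 1) < q / (q - 1) := by
    rw [div_lt_div_iff₀ hp1 hq1]; nlinarith
  obtain ⟨κ, ⟨hκ1, hκ2⟩, heq⟩ := h3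
  have hs1pos : 0 < f ^ q / A := by positivity
  have hs1lt : f ^ q / A < 1 := (div_lt_one hA).mpr h1
  have hκ0pos : 0 < (f ^ q / A) ^ (1 / (q - 1)) := Real.rpow_pos_of_pos hs1pos _
  have hκpos : 0 < κ := hκ0pos.trans hκ1
  have hbase : ((f ^ q / A) ^ (1 / (q - 1))) ^ (q - 1) = f ^ q / A := by
    rw [← Real.rpow_mul hs1pos.le, one_div_mul_cancel hq1.ne', Real.rpow_one]
  have hκq : f ^ q / A < κ ^ (q - 1) := by
    rw [← hbase]
    exact Real.rpow_lt_rpow hκ0pos.le hκ1 hq1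
  have hκqlt1 : κ ^ (q - 1) < 1 := Real.rpow_lt_one hκpos.le hκ2 hq1
  have hκplt1 : κ ^ (p - 1) < 1 := Real.rpow_lt_one hκpos.le hκ2 hp1
  have hκqpos : 0 < κ ^ (q - 1) := Real.rpow_pos_of_pos hκpos _
  have hκppos : 0 < κ ^ (p - 1) := Real.rpow_pos_of_pos hκpos _
  have ht1pos : 0 < f ^ p / F := by positivity
  -- (f^p/F)^((q-1)/(p-1)) < f^q/A
  have hfpF : (f ^ p / F) ^ ((q - 1) / (p - 1)) < f ^ q / A := by
    have hXpos : 0 < (f ^ p / F) ^ ((q - 1) / (p - 1)) := Real.rpow_pos_of_pos ht1pos _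
    have e : f ^ ((p - q) / (p - 1)) * F ^ ((q - 1) / (p - 1)) *
        (f ^ p / F) ^ ((q - 1) / (p - 1)) = f ^ q := by
      rw [Real.div_rpow (by positivity) hF.le, ← Real.rpow_mul hf.le]
      have hFc : (0:ℝ) < F ^ ((q - 1) / (p - 1)) := Real.rpow_pos_of_pos hF _
      field_simp
      rw [← Real.rpow_add hf]
      have hexpo : (p - q) / (p - 1) + p * (q - 1) / (p - 1) = q := by
        field_simp
        ring
      rw [hexpo]
    rw [lt_div_iff₀ hA]
    calc (f ^ p / F) ^ ((q - 1) / (p - 1)) * A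
        < (f ^ p / F) ^ ((q - 1) / (p - 1)) *
          (f ^ ((p - q) / (p - 1)) * F ^ ((q - 1) / (p - 1))) :=
          mul_lt_mul_of_pos_left h2 hXpos
      _ = f ^ q := by rw [← e]; ring
  have hfpFκ : f ^ p / F < κ ^ (p - 1) := by
    have h' := Real.rpow_lt_rpow (Real.rpow_pos_of_pos ht1pos _).le
      (hfpF.trans hκq) (div_pos hp1 hq1)
    rw [← Real.rpow_mul ht1pos.le, ← Real.rpow_mul hκpos.le] at h'
    have e1 : (q - 1) / (p - 1) * ((p - 1) / (q - 1)) = 1 := by field_simp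
    have e2 : (q - 1) * ((p - 1) / (q - 1)) = p - 1 := by field_simp
    rwa [e1, e2, Real.rpow_one] at h'
  have ht1lt : f ^ p / F < 1 := hfpFκ.trans hκplt1
  -- membership instantiations
  have hu1 := hωq (f ^ q / A) ⟨hs1pos.le, hs1lt.le⟩
  have hsκpos : 0 < f ^ q / (κ ^ (q - 1) * A) := by positivity
  have hsκlt : f ^ q / (κ ^ (q - 1) * A) < 1 := by
    rw [div_lt_one (by positivity)]
    have := (div_lt_iff₀ hA).mp hκq
    linarith
  have huκ := hωq (f ^ q / (κ ^ (q - 1) * A)) ⟨hsκpos.le, hsκlt.le⟩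
  have htκpos : 0 < f ^ p / (κ ^ (p - 1) * F) := by positivity
  have htκlt : f ^ p / (κ ^ (p - 1) * F) < 1 := by
    rw [div_lt_one (by positivity)]
    have := (div_lt_iff₀ hF).mp hfpFκ
    linarith
  have hvκ := hωp (f ^ p / (κ ^ (p - 1) * F)) ⟨htκpos.le, htκlt.le⟩
  have hv1 := hωp (f ^ p / F) ⟨ht1pos.le, ht1lt.le⟩
  set u1 := ωq (f ^ q / A) with hu1def
  set uκ := ωq (f ^ q / (κ ^ (q - 1) * A)) with huκdef
  set vκ := ωp (f ^ p / (κ ^ (p - 1) * F)) with hvκdef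
  set v1 := ωp (f ^ p / F) with hv1def
  have hHpuκ : p * uκ ^ (p - 1) - (p - 1) * uκ ^ p = f ^ p / (κ ^ (p - 1) * F) := by
    rw [heq]; exact hvκ.2
  have huκ1 : 1 ≤ uκ := by rw [heq]; exact hvκ.1.1
  have huκtop : uκ < p / (p - 1) := by
    rcases lt_or_eq_of_le (heq ▸ hvκ.1.2 : uκ ≤ p / (p - 1)) with h | h
    · exact h
    · exfalso
      have h0 := hHpuκ
      rw [h, H_top p hp] at h0
      exact absurd h0.symm (ne_of_gt htκpos)
  have hHquκ : q * uκ ^ (q - 1) - (q - 1) * uκ ^ q = f ^ q / (κ ^ (q - 1) * A) := huκ.2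
  have hHqu1 : q * u1 ^ (q - 1) - (q - 1) * u1 ^ q = f ^ q / A := hu1.2
  have hgt : q * u1 ^ (q - 1) - (q - 1) * u1 ^ q < q * uκ ^ (q - 1) - (q - 1) * uκ ^ q := by
    rw [hHquκ, hHqu1]
    apply div_lt_div_of_pos_left (by positivity) (by positivity)
    calc κ ^ (q - 1) * A < 1 * A := mul_lt_mul_of_pos_right hκqlt1 hA
      _ = A := one_mul A
  have hlt : uκ < u1 := by
    by_contra h
    push_neg at h
    rcases eq_or_lt_of_le h with he | hl
    · rw [he] at hgt; exact lt_irrefl _ hgt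
    · have := H_strictAntiOn q hq hu1.1.1 huκ1 hl
      simp only at this
      linarith
  rcases lt_or_ge u1 (p / (p - 1)) with hcase | hcase
  · have hL := L_strictAntiOn p q hq hpq ⟨huκ1, huκtop⟩ ⟨hu1.1.1, hcase⟩ hlt
    simp only at hL
    have hPu1 : 0 < p * u1 ^ (p - 1) - (p - 1) * u1 ^ p := H_pos p hp hu1.1.1 hcase
    have hPuκ : 0 < p * uκ ^ (p - 1) - (p - 1) * uκ ^ p := H_pos p hp huκ1 huκtop
    have hQu1 : 0 < q * u1 ^ (q - 1) - (q - 1) * u1 ^ q := H_pos q hq hu1.1.1 (hcase.trans htopq)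
    have hQuκ : 0 < q * uκ ^ (q - 1) - (q - 1) * uκ ^ q := H_pos q hq huκ1 (huκtop.trans htopq)
    have hrel : (q * uκ ^ (q - 1) - (q - 1) * uκ ^ q) * κ ^ (q - 1)
        = q * u1 ^ (q - 1) - (q - 1) * u1 ^ q := by
      rw [hHquκ, hHqu1]
      field_simp
    have hlogrel : log (q * uκ ^ (q - 1) - (q - 1) * uκ ^ q)
        = log (q * u1 ^ (q - 1) - (q - 1) * u1 ^ q) - (q - 1) * log κ := by
      rw [← hrel, Real.log_mul hQuκ.ne' hκqpos.ne', Real.log_rpow hκpos]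
      ring
    have hα : (p - 1) / (q - 1) * ((q - 1) * log κ) = (p - 1) * log κ := by
      field_simp
    have hmain : log (p * u1 ^ (p - 1) - (p - 1) * u1 ^ p)
        < log (p * uκ ^ (p - 1) - (p - 1) * uκ ^ p) + (p - 1) * log κ := by
      rw [hlogrel] at hL
      linarith [hL, hα]
    have hexpeq : Real.exp ((p - 1) * log κ) = κ ^ (p - 1) := by
      rw [Real.rpow_def_of_pos hκpos, mul_comm]
    have hexp : p * u1 ^ (p - 1) - (p - 1) * u1 ^ p
        < (p * uκ ^ (p - 1) - (p - 1) * uκ ^ p) * κ ^ (p - 1) := by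
      have h2' := Real.exp_lt_exp.mpr hmain
      rwa [Real.exp_add, Real.exp_log hPu1, Real.exp_log hPuκ, hexpeq] at h2'
    have hval : (p * uκ ^ (p - 1) - (p - 1) * uκ ^ p) * κ ^ (p - 1) = f ^ p / F := by
      rw [hHpuκ]
      field_simp
    have hfin : p * u1 ^ (p - 1) - (p - 1) * u1 ^ p < p * v1 ^ (p - 1) - (p - 1) * v1 ^ p := by
      rw [hv1.2]
      linarith [hexp, hval.symm ▸ hexp]
    by_contra h
    push_neg at h
    rcases eq_or_lt_of_le h with he | hl2
    · rw [he] at hfin; exact lt_irrefl _ hfin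
    · have := H_strictAntiOn p hp hu1.1.1 hv1.1.1 hl2
      simp only at this
      linarith
  · have hv1top : v1 < p / (p - 1) := by
      rcases lt_or_eq_of_le hv1.1.2 with h | h
      · exact h
      · exfalso
        have h0 := hv1.2
        rw [h, H_top p hp] at h0
        exact absurd h0.symm (ne_of_gt ht1pos)
    exact lt_of_lt_of_le hv1top hcase
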